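/- Let Λ be a finitely generated group with finite symmetric generating set S acting transitively on a set X, let p ≥ 1, and let f ∈ ℓ^p(Λ). For x ∈ X define f_x(y) = (Σ_{λ : λ·x = y} |f(λ)|^p)^{1/p}. Then for all x₀, x₁ ∈ X, ‖f_{x₀} − f_{x₁}‖_p ≤ d_S(x₀,x₁) · ‖∇^r_S f‖_p, where d_S is the Schreier graph metric on X and ‖∇^r_S f‖_p^p = Σ_{λ∈Λ, s∈S} |f(λ) − f(λs)|^p. -/

import Mathlib

open scoped ENNReal

namespace SchreierAux

section RevTri
variable {ι : Type*} {p : ℝ}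

/-- Reverse triangle inequality for `ℓ^p` tsums of reals. -/
lemma rev_tri (hp : 1 ≤ p) (a b : ι → ℝ)
    (ha : Summable fun i => |a i| ^ p) (hb : Summable fun i => |b i| ^ p) :
    |(∑' i, |a i| ^ p) ^ (1/p) - (∑' i, |b i| ^ p) ^ (1/p)|
      ≤ (∑' i, |a i - b i| ^ p) ^ (1/p) := by
  have hp0 : 0 < p := one_pos.trans_le hp
  set q : ℝ≥0∞ := ENNReal.ofReal p with hq
  have hqt : q.toReal = p := ENNReal.toReal_ofReal hp0.le
  haveI : Fact (1 ≤ q) := ⟨by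
    rw [hq, ← ENNReal.ofReal_one]; exact ENNReal.ofReal_le_ofReal hp⟩
  have hqp : 0 < q.toReal := hqt ▸ hp0
  have ha' : Memℓp a q := memℓp_gen (by simpa [hqt, Real.norm_eq_abs] using ha)
  have hb' : Memℓp b q := memℓp_gen (by simpa [hqt, Real.norm_eq_abs] using hb)
  let A : lp (fun _ : ι => ℝ) q := ⟨a, ha'⟩
  let B : lp (fun _ : ι => ℝ) q := ⟨b, hb'⟩
  have h1 : ‖A‖ = (∑' i, |a i| ^ p) ^ (1/p) := by rw [lp.norm_eq_tsum_rpow hqp, hqt]; rfl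
  have h2 : ‖B‖ = (∑' i, |b i| ^ p) ^ (1/p) := by rw [lp.norm_eq_tsum_rpow hqp, hqt]; rfl
  have h3 : ‖A - B‖ = (∑' i, |a i - b i| ^ p) ^ (1/p) := by
    rw [lp.norm_eq_tsum_rpow hqp, hqt]; rfl
  calc |(∑' i, |a i| ^ p) ^ (1/p) - (∑' i, |b i| ^ p) ^ (1/p)|
      = |‖A‖ - ‖B‖| := by rw [h1, h2]
    _ ≤ ‖A - B‖ := abs_norm_sub_norm_le A B
    _ = _ := h3

lemma summable_abs_sub (hp : 1 ≤ p) {g h : ι → ℝ}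
    (hg : Summable fun i => |g i| ^ p) (hh : Summable fun i => |h i| ^ p) :
    Summable fun i => |g i - h i| ^ p := by
  have hp0 : 0 < p := one_pos.trans_le hp
  have hqt : (ENNReal.ofReal p).toReal = p := ENNReal.toReal_ofReal hp0.le
  have hg' : Memℓp g (ENNReal.ofReal p) := memℓp_gen (by simpa [hqt, Real.norm_eq_abs] using hg)
  have hh' : Memℓp h (ENNReal.ofReal p) := memℓp_gen (by simpa [hqt, Real.norm_eq_abs] using hh)
  have := (hg'.sub hh').summable (by rw [hqt]; exact hp0)
  simpa [hqt, Real.norm_eq_abs] using this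

end RevTri

variable {Λ : Type*} [Group Λ] {X : Type*} [MulAction Λ X]

/-- The pushforward function. -/
noncomputable def Fx (p : ℝ) (g : Λ → ℝ) (x : X) (y : X) : ℝ :=
  (∑' l : {l : Λ // l • x = y}, |g l.1| ^ p) ^ (1/p)

variable {p : ℝ}

lemma summable_sigma_fiber (x : X) {g : Λ → ℝ} (hg : Summable fun l => |g l| ^ p) :
    Summable fun σ : Σ y : X, {l : Λ // l • x = y} => |g σ.2.1| ^ p :=
  ((Equiv.sigmaFiberEquiv (fun l : Λ => l • x)).summable_iff).mpr hg

lemma summable_fiber (x : X) {g : Λ → ℝ} (hg : Summable fun l => |g l| ^ p) (y : X) :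
    Summable fun l : {l : Λ // l • x = y} => |g l.1| ^ p :=
  (summable_sigma_fiber x hg).sigma_factor y

lemma summable_Fsum (x : X) {g : Λ → ℝ} (hg : Summable fun l => |g l| ^ p) :
    Summable fun y : X => ∑' l : {l : Λ // l • x = y}, |g l.1| ^ p :=
  (summable_sigma_fiber x hg).sigma

lemma tsum_fiber_eq (x : X) {g : Λ → ℝ} (hg : Summable fun l => |g l| ^ p) :
    ∑' y : X, ∑' l : {l : Λ // l • x = y}, |g l.1| ^ p = ∑' l : Λ, |g l| ^ p := by
  rw [← Summable.tsum_sigma (summable_sigma_fiber x hg),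
    ← Equiv.tsum_eq (Equiv.sigmaFiberEquiv (fun l : Λ => l • x)) (fun l => |g l| ^ p)]
  rfl

lemma Fx_nonneg (g : Λ → ℝ) (x y : X) : 0 ≤ Fx p g x y :=
  Real.rpow_nonneg (tsum_nonneg fun _ => Real.rpow_nonneg (abs_nonneg _) _) _

lemma Fx_abs_pow (hp : 1 ≤ p) (g : Λ → ℝ) (x y : X) :
    |Fx p g x y| ^ p = ∑' l : {l : Λ // l • x = y}, |g l.1| ^ p := by
  have hp0 : 0 < p := one_pos.trans_le hp
  rw [abs_of_nonneg (Fx_nonneg g x y), Fx,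
    ← Real.rpow_mul (tsum_nonneg fun _ => Real.rpow_nonneg (abs_nonneg _) _),
    one_div_mul_cancel hp0.ne', Real.rpow_one]

lemma tsum_Fx_pow (hp : 1 ≤ p) (x : X) {g : Λ → ℝ} (hg : Summable fun l => |g l| ^ p) :
    ∑' y : X, |Fx p g x y| ^ p = ∑' l : Λ, |g l| ^ p := by
  simp_rw [Fx_abs_pow hp]
  exact tsum_fiber_eq x hg

lemma summable_Fx_pow (hp : 1 ≤ p) (x : X) {g : Λ → ℝ} (hg : Summable fun l => |g l| ^ p) :
    Summable fun y : X => |Fx p g x y| ^ p := by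
  simp_rw [Fx_abs_pow hp]
  exact summable_Fsum x hg

/-- translation of fibers -/
def fiberEquiv (s : Λ) (x y : X) : {l : Λ // l • x = y} ≃ {l : Λ // l • (s • x) = y} where
  toFun := fun μ => ⟨μ.1 * s⁻¹, by rw [mul_smul, inv_smul_smul, μ.2]⟩
  invFun := fun l => ⟨l.1 * s, by rw [mul_smul, l.2]⟩
  left_inv := fun μ => by ext; simp
  right_inv := fun l => by ext; simp

lemma Fx_smul (g : Λ → ℝ) (s : Λ) (x : X) :
    Fx p g (s • x) = Fx p (fun l => g (l * s⁻¹)) x := by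
  funext y
  unfold Fx
  congr 1
  exact ((fiberEquiv s x y).tsum_eq (fun l => |g l.1| ^ p)).symm

lemma summable_mulRight {g : Λ → ℝ} (hg : Summable fun l => |g l| ^ p) (s : Λ) :
    Summable fun l => |g (l * s)| ^ p :=
  ((Equiv.mulRight s).summable_iff (f := fun l => |g l| ^ p)).mpr hg

/-- The contraction property: the pushforward is 1-Lipschitz on `ℓ^p`. -/
lemma contract (hp : 1 ≤ p) (x : X) {g h : Λ → ℝ}
    (hg : Summable fun l => |g l| ^ p) (hh : Summable fun l => |h l| ^ p) :
    (∑' y : X, |Fx p g x y - Fx p h x y| ^ p) ^ (1/p)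
      ≤ (∑' l : Λ, |g l - h l| ^ p) ^ (1/p) := by
  have hp0 : 0 < p := one_pos.trans_le hp
  have hgh : Summable fun l => |g l - h l| ^ p := summable_abs_sub hp hg hh
  have hpt : ∀ y : X, |Fx p g x y - Fx p h x y| ≤ Fx p (g - h) x y := by
    intro y
    have := rev_tri hp (fun l : {l : Λ // l • x = y} => g l.1)
      (fun l : {l : Λ // l • x = y} => h l.1) (summable_fiber x hg y) (summable_fiber x hh y)
    simpa [Fx] using this
  have hptp : ∀ y : X, |Fx p g x y - Fx p h x y| ^ p ≤ |Fx p (g - h) x y| ^ p := by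
    intro y
    rw [abs_of_nonneg (Fx_nonneg _ _ _)]
    exact Real.rpow_le_rpow (abs_nonneg _) (hpt y) hp0.le
  have hs2 : Summable fun y : X => |Fx p (g - h) x y| ^ p := summable_Fx_pow hp x hgh
  have hsum : ∑' y : X, |Fx p g x y - Fx p h x y| ^ p ≤ ∑' l : Λ, |g l - h l| ^ p := by
    calc ∑' y : X, |Fx p g x y - Fx p h x y| ^ p
        ≤ ∑' y : X, |Fx p (g - h) x y| ^ p :=
          Summable.tsum_le_tsum hptp
            (hs2.of_nonneg_of_le (fun y => Real.rpow_nonneg (abs_nonneg _) _) hptp) hs2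
      _ = ∑' l : Λ, |(g - h) l| ^ p := tsum_Fx_pow hp x hgh
      _ = ∑' l : Λ, |g l - h l| ^ p := rfl
  exact Real.rpow_le_rpow
    (tsum_nonneg fun y => Real.rpow_nonneg (abs_nonneg _) _) hsum (by positivity)

end SchreierAux

/-- The Schreier graph metric on a transitive `Λ`-set induced by a finite symmetric
generating set `S`. -/
noncomputable def schreierDist {Λ : Type*} [Group Λ] {X : Type*} [MulAction Λ X]
    (S : Finset Λ) (x y : X) : ℕ :=
  sInf {n : ℕ | ∃ l : List Λ, l.length = n ∧ (∀ u ∈ l, u ∈ S ∨ u⁻¹ ∈ S) ∧ l.prod • x = y}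

/-- Let `Λ` act transitively on `X` with Schreier metric `d_S`, let `p ≥ 1`, `f ∈ ℓ^p(Λ)`
and `f_x(y) = (Σ_{λ : λ·x = y} |f(λ)|^p)^{1/p}`.  Then
`‖f_{x₀} − f_{x₁}‖_p ≤ d_S(x₀,x₁) · ‖∇^r_S f‖_p`, where
`‖∇^r_S f‖_p^p = Σ_{λ ∈ Λ, s ∈ S} |f(λ) − f(λ s)|^p`. -/
theorem pushforward_difference_le_gradient
    {Λ : Type*} [Group Λ] {X : Type*} [MulAction Λ X]
    (S : Finset Λ) (hSgen : Subgroup.closure (S : Set Λ) = ⊤)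
    (hSsymm : ∀ s ∈ S, s⁻¹ ∈ S)
    (htrans : ∀ x y : X, ∃ g : Λ, g • x = y)
    (p : ℝ) (hp : 1 ≤ p) (f : Λ → ℝ) (hf : Memℓp f (ENNReal.ofReal p))
    (x₀ x₁ : X) :
    (∑' y : X,
        |(∑' l : {l : Λ // l • x₀ = y}, |f l.1| ^ p) ^ (1 / p)
          - (∑' l : {l : Λ // l • x₁ = y}, |f l.1| ^ p) ^ (1 / p)| ^ p) ^ (1 / p)
      ≤ (schreierDist S x₀ x₁ : ℝ) *
        (∑' l : Λ, ∑ s ∈ S, |f l - f (l * s)| ^ p) ^ (1 / p) := by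
  open SchreierAux in
  have hp0 : 0 < p := one_pos.trans_le hp
  have hqt : (ENNReal.ofReal p).toReal = p := ENNReal.toReal_ofReal hp0.le
  have hfs : Summable fun l : Λ => |f l| ^ p := by
    simpa [hqt, Real.norm_eq_abs] using hf.summable (p := ENNReal.ofReal p) (by rw [hqt]; exact hp0)
  -- gradient quantity
  set G : ℝ := ∑' l : Λ, ∑ s ∈ S, |f l - f (l * s)| ^ p with hGdef
  have hGsummand : ∀ s ∈ S, Summable fun l : Λ => |f l - f (l * s)| ^ p := fun s _ =>
    summable_abs_sub hp hfs (summable_mulRight hfs s)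
  have hGsum : Summable fun l : Λ => ∑ s ∈ S, |f l - f (l * s)| ^ p :=
    summable_sum fun s hs => hGsummand s hs
  have hG0 : 0 ≤ G := tsum_nonneg fun l =>
    Finset.sum_nonneg fun s _ => Real.rpow_nonneg (abs_nonneg _) _
  -- single-generator bound
  have hsingle : ∀ t ∈ S, ∑' l : Λ, |f l - f (l * t)| ^ p ≤ G := by
    intro t ht
    refine Summable.tsum_le_tsum (fun l => ?_) (hGsummand t ht) hGsum
    exact Finset.single_le_sum (f := fun s => |f l - f (l * s)| ^ p)
      (fun s _ => Real.rpow_nonneg (abs_nonneg _) _) ht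
  -- edge bound
  have hedge : ∀ (x : X) (u : Λ), (u ∈ S ∨ u⁻¹ ∈ S) →
      (∑' y : X, |Fx p f (u • x) y - Fx p f x y| ^ p) ^ (1/p) ≤ G ^ (1/p) := by
    intro x u hu
    have hfu : Summable fun l : Λ => |f (l * u⁻¹)| ^ p := summable_mulRight hfs u⁻¹
    have h1 : (∑' y : X, |Fx p f (u • x) y - Fx p f x y| ^ p) ^ (1/p)
        ≤ (∑' l : Λ, |f (l * u⁻¹) - f l| ^ p) ^ (1/p) := by
      have := contract (g := fun l => f (l * u⁻¹)) (h := f) hp x hfu hfs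
      rwa [← Fx_smul] at this
    refine h1.trans (Real.rpow_le_rpow (tsum_nonneg fun _ =>
      Real.rpow_nonneg (abs_nonneg _) _) ?_ (by positivity))
    rcases hu with hu | hu
    · calc ∑' l : Λ, |f (l * u⁻¹) - f l| ^ p
          = ∑' l : Λ, |f (l * u * u⁻¹) - f (l * u)| ^ p :=
            ((Equiv.mulRight u).tsum_eq (fun l => |f (l * u⁻¹) - f l| ^ p)).symm
        _ = ∑' l : Λ, |f l - f (l * u)| ^ p := by simp [mul_assoc]
        _ ≤ G := hsingle u hu
    · calc ∑' l : Λ, |f (l * u⁻¹) - f l| ^ p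
          = ∑' l : Λ, |f l - f (l * u⁻¹)| ^ p := by simp_rw [abs_sub_comm]
        _ ≤ G := hsingle u⁻¹ hu
  -- set up the lp space over X
  set q : ℝ≥0∞ := ENNReal.ofReal p with hq
  haveI : Fact (1 ≤ q) := ⟨by
    rw [hq, ← ENNReal.ofReal_one]; exact ENNReal.ofReal_le_ofReal hp⟩
  have hqp : 0 < q.toReal := by rw [hq, hqt]; exact hp0
  have hmem : ∀ x : X, Memℓp (Fx p f x) q := fun x =>
    memℓp_gen (by
      rw [hq, hqt]; simpa [Real.norm_eq_abs] using summable_Fx_pow hp x hfs)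
  set FL : X → lp (fun _ : X => ℝ) q := fun x => ⟨Fx p f x, hmem x⟩ with hFL
  have hdist : ∀ x x' : X,
      ‖FL x - FL x'‖ = (∑' y : X, |Fx p f x y - Fx p f x' y| ^ p) ^ (1/p) := by
    intro x x'
    rw [lp.norm_eq_tsum_rpow hqp, hqt]
    rfl
  have hedge' : ∀ (x : X) (u : Λ), (u ∈ S ∨ u⁻¹ ∈ S) → ‖FL (u • x) - FL x‖ ≤ G ^ (1/p) := by
    intro x u hu
    rw [hdist]
    exact hedge x u hu
  -- path induction
  have hpath : ∀ l : List Λ, (∀ u ∈ l, u ∈ S ∨ u⁻¹ ∈ S) →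
      ‖FL (l.prod • x₀) - FL x₀‖ ≤ (l.length : ℝ) * G ^ (1/p) := by
    intro l
    induction l with
    | nil => intro _; simp
    | cons u t ih =>
      intro hmemb
      have h1 : ‖FL ((u :: t).prod • x₀) - FL x₀‖
          ≤ ‖FL (u • (t.prod • x₀)) - FL (t.prod • x₀)‖ + ‖FL (t.prod • x₀) - FL x₀‖ := by
        rw [List.prod_cons, mul_smul]
        exact norm_sub_le_norm_sub_add_norm_sub _ _ _
      have h2 : ‖FL (u • (t.prod • x₀)) - FL (t.prod • x₀)‖ ≤ G ^ (1/p) :=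
        hedge' _ u (hmemb u List.mem_cons_self)
      have h3 : ‖FL (t.prod • x₀) - FL x₀‖ ≤ (t.length : ℝ) * G ^ (1/p) :=
        ih fun v hv => hmemb v (List.mem_cons_of_mem u hv)
      calc ‖FL ((u :: t).prod • x₀) - FL x₀‖
          ≤ G ^ (1/p) + (t.length : ℝ) * G ^ (1/p) := h1.trans (add_le_add h2 h3)
        _ = ((u :: t).length : ℝ) * G ^ (1/p) := by
            simp [List.length_cons]; ring
  -- a path realizing the distance
  have hne : {n : ℕ | ∃ l : List Λ, l.length = n ∧ (∀ u ∈ l, u ∈ S ∨ u⁻¹ ∈ S)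
      ∧ l.prod • x₀ = x₁}.Nonempty := by
    obtain ⟨g, hg⟩ := htrans x₀ x₁
    have hg' : g ∈ Submonoid.closure ((S : Set Λ) ∪ (S : Set Λ)⁻¹) := by
      rw [← Subgroup.closure_toSubmonoid, hSgen]
      exact trivial
    obtain ⟨l, hl1, hl2⟩ := Submonoid.exists_list_of_mem_closure hg'
    refine ⟨l.length, l, rfl, fun u hu => ?_, by rw [hl2]; exact hg⟩
    rcases hl1 u hu with h | h
    · exact Or.inl h
    · exact Or.inr (Set.mem_inv.mp h)
  obtain ⟨l₀, hlen, hlmem, hlprod⟩ := Nat.sInf_mem hne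
  -- conclude
  have hLHS : (∑' y : X,
        |(∑' l : {l : Λ // l • x₀ = y}, |f l.1| ^ p) ^ (1 / p)
          - (∑' l : {l : Λ // l • x₁ = y}, |f l.1| ^ p) ^ (1 / p)| ^ p) ^ (1 / p)
      = ‖FL x₀ - FL x₁‖ := (hdist x₀ x₁).symm
  rw [hLHS, norm_sub_rev]
  have h := hpath l₀ hlmem
  rw [hlprod] at h
  have hd : (schreierDist S x₀ x₁ : ℝ) = (l₀.length : ℝ) := by
    rw [hlen]; rfl
  rw [hd]
  exact h
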